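/- Let H be an ℓ-uniform hypergraph (ℓ ≥ 2), let k be a positive integer and let n ≥ 2 be an integer with ⌊k/(ℓ·log n)⌋ ≥ 1. If R(H, ⌊k/(ℓ·log n)⌋) > n, then R_ℓ(H, k) > n. -/

import Mathlib

def RamseyProp (α : Type) [DecidableEq α] (l k N s : ℕ) : Prop :=
  ∀ (A : Finset α) (c : Finset α → Fin k), N ≤ A.card →
    ∃ S : Finset α, S ⊆ A ∧ S.card = s ∧ ∃ x, ∀ e ⊆ S, e.card = l → c e = x

lemma ramsey_zero (k s : ℕ) : ∀ (α : Type) [DecidableEq α], RamseyProp α 0 k s s := by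
  intro α _ A c hA
  obtain ⟨S, hSA, hScard⟩ := Finset.exists_subset_card_eq hA
  refine ⟨S, hSA, hScard, c ∅, ?_⟩
  intro e _ he
  rw [Finset.card_eq_zero.mp he]

lemma seq_lemma (l k : ℕ) (IH : ∀ s, ∃ N, ∀ (α : Type) [DecidableEq α], RamseyProp α l k N s) :
    ∀ M, ∃ N, ∀ (α : Type) [DecidableEq α] (A : Finset α) (c : Finset α → Fin k), N ≤ A.card →
      ∃ (a : Fin M → α) (χ : Fin M → Fin k), Function.Injective a ∧ (∀ i, a i ∈ A) ∧
        ∀ (i : Fin M) (e : Finset α), e.card = l → (∀ y ∈ e, ∃ j, i < j ∧ a j = y) →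
          c (insert (a i) e) = χ i := by
  intro M
  induction M with
  | zero =>
      refine ⟨0, fun α _ A c _ => ⟨Fin.elim0, Fin.elim0, fun i => i.elim0, fun i => i.elim0,
        fun i => i.elim0⟩⟩
  | succ M ih =>
      obtain ⟨N₀, h₀⟩ := ih
      obtain ⟨N₁, h₁⟩ := IH N₀
      refine ⟨N₁ + 1, ?_⟩
      intro α _ A c hA
      have hAne : A.Nonempty := Finset.card_pos.mp (by omega)
      obtain ⟨a₀, ha₀⟩ := hAne
      have hcard : N₁ ≤ (A.erase a₀).card := by
        rw [Finset.card_erase_of_mem ha₀]; omega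
      obtain ⟨S, hSA, hScard, x, hx⟩ := h₁ α (A.erase a₀) (fun e => c (insert a₀ e)) hcard
      obtain ⟨a', χ', hinj', hmem', hcol'⟩ := h₀ α S c (le_of_eq hScard.symm)
      have ha'S : ∀ j, a' j ∈ S := hmem'
      have ha'ne : ∀ j, a' j ≠ a₀ := fun j =>
        Finset.ne_of_mem_erase (hSA (ha'S j))
      refine ⟨Fin.cons a₀ a', Fin.cons x χ', ?_, ?_, ?_⟩
      · rw [Fin.cons_injective_iff]
        exact ⟨fun ⟨j, hj⟩ => ha'ne j hj, hinj'⟩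
      · intro i
        refine Fin.cases ha₀ (fun j => Finset.mem_of_mem_erase (hSA (ha'S j))) i
      · intro i
        refine Fin.cases ?_ ?_ i
        · intro e hecard hesub
          have heS : e ⊆ S := by
            intro y hy
            obtain ⟨j, hj0, hjy⟩ := hesub y hy
            obtain ⟨j', rfl⟩ := Fin.eq_succ_of_ne_zero (Fin.pos_iff_ne_zero.mp hj0)
            rw [Fin.cons_succ] at hjy
            exact hjy ▸ ha'S j'
          simp only [Fin.cons_zero]
          exact hx e heS hecard
        · intro j e hecard hesub
          rw [Fin.cons_succ, Fin.cons_succ]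
          refine hcol' j e hecard ?_
          intro y hy
          obtain ⟨j', hjj', hj'y⟩ := hesub y hy
          have hj'0 : j' ≠ 0 := by
            intro h; rw [h] at hjj'; exact absurd hjj' (Fin.not_lt_zero _).elim
          obtain ⟨j'', rfl⟩ := Fin.eq_succ_of_ne_zero hj'0
          rw [Fin.cons_succ] at hj'y
          exact ⟨j'', Fin.succ_lt_succ_iff.mp hjj', hj'y⟩

lemma ramsey_exists (l k s : ℕ) : ∃ N, ∀ (α : Type) [DecidableEq α], RamseyProp α l k N s := by
  induction l generalizing s with
  | zero => exact ⟨s, ramsey_zero k s⟩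
  | succ l IH =>
      rcases Nat.eq_zero_or_pos k with hk | hk
      · subst hk
        exact ⟨0, fun α _ A c _ => (c ∅).elim0⟩
      obtain ⟨N, hN⟩ := seq_lemma l k IH (k * s + 1)
      refine ⟨N, ?_⟩
      intro α _ A c hA
      obtain ⟨a, χ, hinj, hmem, hcol⟩ := hN α A c hA
      have hpig : ∃ x ∈ (Finset.univ : Finset (Fin k)),
          s < (Finset.univ.filter fun i => χ i = x).card := by
        apply Finset.exists_lt_card_fiber_of_mul_lt_card_of_maps_to
        · intro i _; exact Finset.mem_univ _
        · simp [Finset.card_univ]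
      obtain ⟨x, _, hxcard⟩ := hpig
      obtain ⟨I, hIsub, hIcard⟩ :=
        Finset.exists_subset_card_eq (s := Finset.univ.filter fun i => χ i = x) (le_of_lt hxcard)
      refine ⟨I.image a, ?_, ?_, x, ?_⟩
      · intro y hy
        obtain ⟨j, _, rfl⟩ := Finset.mem_image.mp hy
        exact hmem j
      · rw [Finset.card_image_of_injective _ hinj, hIcard]
      · intro e heI hecard
        have hene : e.Nonempty := Finset.card_pos.mp (by omega)
        have hJ : ∀ y ∈ e, ∃ j ∈ I, a j = y := by
          intro y hy
          obtain ⟨j, hj, rfl⟩ := Finset.mem_image.mp (heI hy)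
          exact ⟨j, hj, rfl⟩ 
        set J := I.filter (fun j => a j ∈ e) with hJdef
        have hJne : J.Nonempty := by
          obtain ⟨y, hy⟩ := hene
          obtain ⟨j, hjI, hjy⟩ := hJ y hy
          exact ⟨j, Finset.mem_filter.mpr ⟨hjI, hjy ▸ hy⟩⟩
        set j₀ := J.min' hJne with hj₀def
        have hj₀J : j₀ ∈ J := J.min'_mem hJne
        have hj₀I : j₀ ∈ I := (Finset.mem_filter.mp hj₀J).1
        have haj₀ : a j₀ ∈ e := (Finset.mem_filter.mp hj₀J).2
        have hχ : χ j₀ = x := by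
          have := hIsub hj₀I
          exact (Finset.mem_filter.mp this).2
        have hkey : c (insert (a j₀) (e.erase (a j₀))) = χ j₀ := by
          apply hcol
          · rw [Finset.card_erase_of_mem haj₀, hecard]; omega
          · intro y hy
            have hye : y ∈ e := Finset.mem_of_mem_erase hy
            have hyne : y ≠ a j₀ := Finset.ne_of_mem_erase hy
            obtain ⟨j, hjI, hjy⟩ := hJ y hye
            have hjJ : j ∈ J := Finset.mem_filter.mpr ⟨hjI, hjy ▸ hye⟩
            have hjne : j ≠ j₀ := by
              intro h; exact hyne (by rw [← hjy, h])
            exact ⟨j, lt_of_le_of_ne (J.min'_le j hjJ) (Ne.symm hjne), hjy⟩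
        rw [Finset.insert_erase haj₀] at hkey
        rw [hkey, hχ]

lemma key_ineq (l k t n m : ℕ) (hl : 2 ≤ l) (hn : 2 ≤ n) (hm : m ≤ n) (ht : 1 ≤ t)
    (htk : (t : ℝ) * ((l : ℝ) * Real.log n) ≤ (k : ℝ)) :
    m.choose l * (t - 1) ^ k < t ^ k := by
  have htR : (1 : ℝ) ≤ (t : ℝ) := by exact_mod_cast ht
  have htR0 : (0 : ℝ) < (t : ℝ) := by linarith
  have hnR : (0 : ℝ) < (n : ℝ) := by positivity
  have hnl : (0 : ℝ) < (n : ℝ) ^ l := by positivity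
  -- choose m l ≤ n^l / 2
  have hchoose : (m.choose l : ℝ) ≤ (n : ℝ) ^ l / 2 := by
    have h1 : (m.choose l : ℝ) ≤ (n.choose l : ℝ) := by
      exact_mod_cast Nat.choose_le_choose l hm
    have h2 : (n.choose l : ℝ) ≤ (n : ℝ) ^ l / (l.factorial : ℝ) :=
      Nat.choose_le_pow_div l n
    have h3 : (2 : ℝ) ≤ (l.factorial : ℝ) := by
      have : 2 ≤ l.factorial := by
        calc 2 = Nat.factorial 2 := rfl
        _ ≤ l.factorial := Nat.factorial_le hl
      exact_mod_cast this
    have h4 : (n : ℝ) ^ l / (l.factorial : ℝ) ≤ (n : ℝ) ^ l / 2 :=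
      div_le_div_of_nonneg_left hnl.le (by linarith) h3
    linarith
  -- (t-1)^k ≤ t^k * exp(-k/t)
  have hsub : ((t - 1 : ℕ) : ℝ) = (t : ℝ) - 1 := by
    rw [Nat.cast_sub ht]; norm_num
  have hexp1 : (t : ℝ) - 1 ≤ (t : ℝ) * Real.exp (-(1 / t)) := by
    have := Real.add_one_le_exp (-(1 / (t : ℝ)))
    have h' : 1 - 1 / (t : ℝ) ≤ Real.exp (-(1 / t)) := by linarith
    have := mul_le_mul_of_nonneg_left h' htR0.le
    calc (t : ℝ) - 1 = (t : ℝ) * (1 - 1 / t) := by field_simp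
    _ ≤ (t : ℝ) * Real.exp (-(1 / t)) := this
  have hpow : ((t - 1 : ℕ) : ℝ) ^ k ≤ (t : ℝ) ^ k * Real.exp (-(k / t)) := by
    rw [hsub]
    calc ((t : ℝ) - 1) ^ k ≤ ((t : ℝ) * Real.exp (-(1 / t))) ^ k := by
          apply pow_le_pow_left₀ (by linarith [div_le_one_of_le₀ htR (by linarith)]) hexp1
    _ = (t : ℝ) ^ k * Real.exp (-(1 / t)) ^ k := mul_pow _ _ _
    _ = (t : ℝ) ^ k * Real.exp (-(k / t)) := by
          rw [← Real.exp_nat_mul]; ring_nf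
  -- exp(-k/t) ≤ n^(-l)
  have hexp2 : Real.exp (-((k : ℝ) / t)) ≤ ((n : ℝ) ^ l)⁻¹ := by
    have hkt : (l : ℝ) * Real.log n ≤ (k : ℝ) / t := by
      rw [le_div_iff₀ htR0]; linarith [htk]
    have : Real.exp (-((k : ℝ) / t)) ≤ Real.exp (-((l : ℝ) * Real.log n)) :=
      Real.exp_le_exp.mpr (by linarith)
    have heq : Real.exp (-((l : ℝ) * Real.log n)) = ((n : ℝ) ^ l)⁻¹ := by
      rw [Real.exp_neg, Real.exp_nat_mul, Real.exp_log hnR]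
    linarith [heq ▸ this]
  -- combine
  have htk0 : (0 : ℝ) < (t : ℝ) ^ k := by positivity
  have hmain : (m.choose l : ℝ) * ((t - 1 : ℕ) : ℝ) ^ k < (t : ℝ) ^ k := by
    have hc0 : (0 : ℝ) ≤ (m.choose l : ℝ) := by positivity
    have hps0 : (0 : ℝ) ≤ ((t - 1 : ℕ) : ℝ) ^ k := by positivity
    calc (m.choose l : ℝ) * ((t - 1 : ℕ) : ℝ) ^ k
        ≤ ((n : ℝ) ^ l / 2) * ((t : ℝ) ^ k * Real.exp (-(k / t))) := by
          apply mul_le_mul hchoose hpow hps0 (by positivity)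
    _ ≤ ((n : ℝ) ^ l / 2) * ((t : ℝ) ^ k * ((n : ℝ) ^ l)⁻¹) := by
          apply mul_le_mul_of_nonneg_left _ (by positivity)
          exact mul_le_mul_of_nonneg_left hexp2 htk0.le
    _ = (t : ℝ) ^ k / 2 := by field_simp
    _ < (t : ℝ) ^ k := by linarith
  exact_mod_cast hmain

lemma good_g {β : Type*} [DecidableEq β] (t k : ℕ) (ht : 1 ≤ t) (E : Finset β)
    (L : β → Finset ℕ) (χ : β → Fin t) (hL : ∀ e ∈ E, (L e).card = k)
    (hkey : E.card * (t - 1) ^ k < t ^ k) :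
    ∃ g : ℕ → Fin t, ∀ e ∈ E, ∃ x ∈ L e, g x = χ e := by
  have t0 : Fin t := ⟨0, ht⟩
  rcases E.eq_empty_or_nonempty with hE | hE
  · exact ⟨fun _ => t0, by simp [hE]⟩
  set C : Finset ℕ := E.biUnion L with hC
  have hLC : ∀ e ∈ E, L e ⊆ C := fun e he => Finset.subset_biUnion_of_mem L he
  have hkC : k ≤ C.card := by
    obtain ⟨e₀, he₀⟩ := hE
    calc k = (L e₀).card := (hL e₀ he₀).symm
    _ ≤ C.card := Finset.card_le_card (hLC e₀ he₀)
  set Bad : β → Finset (↥C → Fin t) := fun e =>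
    Fintype.piFinset (fun x => if (x : ℕ) ∈ L e then Finset.univ.erase (χ e) else Finset.univ)
    with hBad
  have hBadCard : ∀ e ∈ E, (Bad e).card = (t - 1) ^ k * t ^ (C.card - k) := by
    intro e he
    rw [hBad]
    rw [Fintype.card_piFinset]
    have hfilt : (Finset.univ.filter fun x : ↥C => (x : ℕ) ∈ L e).card = k := by
      rw [← hL e he]
      refine Finset.card_bij (fun x _ => (x : ℕ)) ?_ ?_ ?_
      · intro x hx; exact (Finset.mem_filter.mp hx).2
      · intro x hx y hy hxy; exact Subtype.ext hxy
      · intro y hy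
        exact ⟨⟨y, hLC e he hy⟩, Finset.mem_filter.mpr ⟨Finset.mem_univ _, hy⟩, rfl⟩
    calc (∏ x : ↥C, (if (x : ℕ) ∈ L e then Finset.univ.erase (χ e) else Finset.univ).card)
        = ∏ x : ↥C, (if (x : ℕ) ∈ L e then t - 1 else t) := by
          apply Finset.prod_congr rfl
          intro x _
          split
          · rw [Finset.card_erase_of_mem (Finset.mem_univ _), Finset.card_univ, Fintype.card_fin]
          · rw [Finset.card_univ, Fintype.card_fin]
    _ = (t - 1) ^ (Finset.univ.filter fun x : ↥C => (x : ℕ) ∈ L e).card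
          * t ^ (Finset.univ.filter fun x : ↥C => ¬(x : ℕ) ∈ L e).card := by
          rw [Finset.prod_ite]
          simp [Finset.prod_const]
    _ = (t - 1) ^ k * t ^ (C.card - k) := by
          rw [hfilt]
          congr 1
          congr 1
          have := Finset.card_filter_add_card_filter_not
            (s := (Finset.univ : Finset ↥C)) (p := fun x : ↥C => (x : ℕ) ∈ L e)
          rw [Finset.card_univ, Fintype.card_coe] at this
          omega
  have htotal : (E.biUnion Bad).card < Fintype.card (↥C → Fin t) := by
    calc (E.biUnion Bad).card ≤ ∑ e ∈ E, (Bad e).card := Finset.card_biUnion_le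
    _ = ∑ e ∈ E, (t - 1) ^ k * t ^ (C.card - k) := Finset.sum_congr rfl hBadCard
    _ = E.card * ((t - 1) ^ k * t ^ (C.card - k)) := by rw [Finset.sum_const, smul_eq_mul]
    _ < t ^ k * t ^ (C.card - k) := by
        rw [← mul_assoc]
        apply Nat.mul_lt_mul_right (Nat.pow_pos ht) |>.mpr hkey
    _ = t ^ C.card := by rw [← pow_add]; congr 1; omega
    _ = Fintype.card (↥C → Fin t) := by
        rw [Fintype.card_fun, Fintype.card_coe, Fintype.card_fin]
  have hg : ∃ g : ↥C → Fin t, g ∉ E.biUnion Bad := by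
    by_contra h
    push_neg at h
    have : (Finset.univ : Finset (↥C → Fin t)) ⊆ E.biUnion Bad := fun g _ => h g
    have := Finset.card_le_card this
    rw [Finset.card_univ] at this
    omega
  obtain ⟨g, hg⟩ := hg
  refine ⟨fun y => if h : y ∈ C then g ⟨y, h⟩ else t0, ?_⟩
  intro e he
  have hge : g ∉ Bad e := fun h => hg (Finset.mem_biUnion.mpr ⟨e, he, h⟩)
  rw [hBad, Fintype.mem_piFinset] at hge
  push_neg at hge
  obtain ⟨x, hx⟩ := hge
  by_cases hxL : (x : ℕ) ∈ L e
  · rw [if_pos hxL] at hx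
    have hgx : g x = χ e := by
      by_contra hne
      exact hx (Finset.mem_erase.mpr ⟨hne, Finset.mem_univ _⟩)
    refine ⟨(x : ℕ), hxL, ?_⟩
    simpa using hgx
  · rw [if_neg hxL] at hx
    exact absurd (Finset.mem_univ _) hx



/-- A hypergraph on vertex type `V`, given by its (finite) set of edges,
each edge being a finite set of vertices. -/
structure Hypergraph' (V : Type*) where
  edges : Finset (Finset V)

namespace Hypergraph'

variable {V : Type*} [DecidableEq V]

/-- `H` is `l`-uniform: every edge has exactly `l` vertices. -/
def IsUniform (H : Hypergraph' V) (l : ℕ) : Prop :=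
  ∀ e ∈ H.edges, e.card = l

/-- A colouring `c` of the edges of the complete `l`-uniform hypergraph on `Fin n`
(viewed as a colouring of all finite subsets of `Fin n`) contains a monochromatic
copy of the hypergraph `H`. -/
def HasMonoCopyIn {β : Type*} (H : Hypergraph' V) (n : ℕ) (c : Finset (Fin n) → β) : Prop :=
  ∃ (f : V → Fin n) (x : β), Function.Injective f ∧
    ∀ e ∈ H.edges, c (e.image f) = x

/-- The `k`-colour list Ramsey number of an `l`-uniform hypergraph `H`: the least `n`
for which one can assign a list of `k` colours to each `l`-subset of `Fin n` so that
every colouring of the `l`-subsets from these lists contains a monochromatic copy of `H`. -/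
noncomputable def listRamsey (H : Hypergraph' V) (l k : ℕ) : ℕ :=
  sInf { n : ℕ | ∃ L : Finset (Fin n) → Finset ℕ,
    (∀ e : Finset (Fin n), e.card = l → (L e).card = k) ∧
    ∀ c : Finset (Fin n) → ℕ, (∀ e : Finset (Fin n), e.card = l → c e ∈ L e) →
      H.HasMonoCopyIn n c }

/-- The ordinary `k`-colour Ramsey number of a hypergraph `H`: the least `n` such that
every `k`-colouring of the edges of the complete hypergraph on `Fin n` contains a
monochromatic copy of `H`. -/
noncomputable def ramsey (H : Hypergraph' V) (k : ℕ) : ℕ :=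
  sInf { n : ℕ | ∀ c : Finset (Fin n) → Fin k, H.HasMonoCopyIn n c }

end Hypergraph'

/-- The complete `l`-uniform hypergraph on `r` vertices. -/
def completeHG (r l : ℕ) : Hypergraph' (Fin r) :=
  ⟨Finset.powersetCard l Finset.univ⟩

/-- A finite set `G` of `l`-subsets of `Fin n` (an `l`-graph on `n` vertices)
contains a copy of the hypergraph `H`. -/
def IsCopyIn {V : Type*} [DecidableEq V] (H : Hypergraph' V) {n : ℕ}
    (G : Finset (Finset (Fin n))) : Prop :=
  ∃ f : V → Fin n, Function.Injective f ∧ ∀ e ∈ H.edges, e.image f ∈ G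

theorem list_ramsey_lower_from_ramsey {V : Type*} [DecidableEq V]
    (H : Hypergraph' V) (l : ℕ) (hl : 2 ≤ l) (hunif : H.IsUniform l)
    (k n : ℕ) (hk : 0 < k) (hn : 2 ≤ n)
    (hfloor : 1 ≤ ⌊(k : ℝ) / ((l : ℝ) * Real.log n)⌋₊)
    (hram : n < H.ramsey ⌊(k : ℝ) / ((l : ℝ) * Real.log n)⌋₊) :
    n < H.listRamsey l k := by
  classical
  set t : ℕ := ⌊(k : ℝ) / ((l : ℝ) * Real.log n)⌋₊ with ht_def
  have ht : 1 ≤ t := hfloor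
  -- basic real facts
  have hlogn : 0 < Real.log n := Real.log_pos (by exact_mod_cast hn)
  have hlln : (0 : ℝ) < (l : ℝ) * Real.log n := by
    have hl0 : (0 : ℝ) < (l : ℝ) := by exact_mod_cast (by omega : 0 < l)
    exact mul_pos hl0 hlogn
  have htk : (t : ℝ) * ((l : ℝ) * Real.log n) ≤ (k : ℝ) := by
    have h1 : (t : ℝ) ≤ (k : ℝ) / ((l : ℝ) * Real.log n) := by
      rw [ht_def]
      exact Nat.floor_le (by positivity)
    rw [← le_div_iff₀ hlln]
    exact h1
  -- the ordinary Ramsey set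
  set Sram := { n' : ℕ | ∀ c : Finset (Fin n') → Fin t, H.HasMonoCopyIn n' c } with hSram
  have hramne : Sram.Nonempty := by
    by_contra h
    rw [Set.not_nonempty_iff_eq_empty] at h
    rw [Hypergraph'.ramsey, ← hSram, h, Nat.sInf_empty] at hram
    omega
  have hnnot : n ∉ Sram := Nat.notMem_of_lt_sInf hram
  -- a bad t-colouring of K_n
  have hbad : ∃ χ : Finset (Fin n) → Fin t, ¬ H.HasMonoCopyIn n χ := by
    rw [hSram] at hnnot
    simp only [Set.mem_setOf_eq] at hnnot
    push_neg at hnnot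
    exact hnnot
  obtain ⟨χ, hχ⟩ := hbad
  -- V is finite
  obtain ⟨N₀, hN₀⟩ := hramne
  obtain ⟨f₀, _, hf₀, _⟩ := hN₀ (fun _ => ⟨0, ht⟩)
  haveI : Finite V := Finite.of_injective f₀ hf₀
  haveI : Fintype V := Fintype.ofFinite V
  -- Part A : membership of some N in the list-Ramsey set
  obtain ⟨N, hN⟩ := ramsey_exists l k (Fintype.card V)
  have hmemN : N ∈ { n' : ℕ | ∃ L : Finset (Fin n') → Finset ℕ,
      (∀ e : Finset (Fin n'), e.card = l → (L e).card = k) ∧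
      ∀ c : Finset (Fin n') → ℕ, (∀ e : Finset (Fin n'), e.card = l → c e ∈ L e) →
        H.HasMonoCopyIn n' c } := by
    refine ⟨fun _ => Finset.range k, fun _ _ => Finset.card_range k, ?_⟩
    intro c hc
    set c' : Finset (Fin N) → Fin k := fun e => if h : c e < k then ⟨c e, h⟩ else ⟨0, hk⟩
      with hc'
    obtain ⟨S, _, hScard, x, hx⟩ := hN (Fin N) Finset.univ c'
      (by rw [Finset.card_univ, Fintype.card_fin])
    set f : V → Fin N := fun v => ↑(S.orderIsoOfFin hScard ((Fintype.equivFin V) v)) with hf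
    have hfinj : Function.Injective f := by
      intro u v huv
      apply (Fintype.equivFin V).injective
      apply (S.orderIsoOfFin hScard).injective
      exact Subtype.ext huv
    refine ⟨f, (x : ℕ), hfinj, ?_⟩
    intro e he
    have himg : e.image f ⊆ S := by
      intro y hy
      obtain ⟨v, _, rfl⟩ := Finset.mem_image.mp hy
      exact (S.orderIsoOfFin hScard ((Fintype.equivFin V) v)).2
    have hcard : (e.image f).card = l := by
      rw [Finset.card_image_of_injective _ hfinj]
      exact hunif e he
    have hce : c (e.image f) < k := Finset.mem_range.mp (hc _ hcard)
    have := hx (e.image f) himg hcard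
    rw [hc'] at this
    simp only [dif_pos hce] at this
    exact congrArg Fin.val this
  -- Part B : every element of the list set exceeds n
  have hlw : ∀ b ∈ { n' : ℕ | ∃ L : Finset (Fin n') → Finset ℕ,
      (∀ e : Finset (Fin n'), e.card = l → (L e).card = k) ∧
      ∀ c : Finset (Fin n') → ℕ, (∀ e : Finset (Fin n'), e.card = l → c e ∈ L e) →
        H.HasMonoCopyIn n' c }, n < b := by
    intro b hb
    by_contra hble
    push_neg at hble
    obtain ⟨L, hLcard, hforce⟩ := hb
    set E : Finset (Finset (Fin b)) := Finset.univ.powersetCard l with hE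
    have hEmem : ∀ e : Finset (Fin b), e.card = l → e ∈ E := by
      intro e he
      exact Finset.mem_powersetCard.mpr ⟨Finset.subset_univ e, he⟩
    set χ' : Finset (Fin b) → Fin t := fun s => χ (s.image (Fin.castLE hble)) with hχ'
    have hkey : E.card * (t - 1) ^ k < t ^ k := by
      have : E.card = b.choose l := by
        rw [hE, Finset.card_powersetCard, Finset.card_univ, Fintype.card_fin]
      rw [this]
      exact key_ineq l k t n b hl hn hble ht htk
    obtain ⟨g, hg⟩ := good_g t k ht E L χ'
      (fun e he => hLcard e (Finset.mem_powersetCard.mp he).2) hkey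
    set c : Finset (Fin b) → ℕ := fun e =>
      if h : ∃ x ∈ L e, g x = χ' e then h.choose else 0 with hcdef
    have hcprop : ∀ e : Finset (Fin b), e.card = l → c e ∈ L e ∧ g (c e) = χ' e := by
      intro e he
      have hex := hg e (hEmem e he)
      rw [hcdef]
      simp only [dif_pos hex]
      exact hex.choose_spec
    obtain ⟨f, x, hfinj, hmono⟩ := hforce c (fun e he => (hcprop e he).1)
    apply hχ
    refine ⟨fun v => Fin.castLE hble (f v), g x, ?_, ?_⟩
    · intro u v huv
      exact hfinj (Fin.castLE_injective hble huv)
    · intro e he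
      have hcard : (e.image f).card = l := by
        rw [Finset.card_image_of_injective _ hfinj]
        exact hunif e he
      have h1 := (hcprop (e.image f) hcard).2
      rw [hmono e he] at h1
      rw [h1, hχ']
      simp only [Finset.image_image]
      rfl
  -- conclude
  have : n + 1 ≤ H.listRamsey l k := by
    rw [Hypergraph'.listRamsey]
    exact le_csInf ⟨N, hmemN⟩ (fun b hb => hlw b hb)
  omega
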